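/- Let d and n be positive integers and let Ω_d = {e^{2πik/d} : k = 0,1,...,d-1} be the set of d-th roots of unity. For any c_1,...,c_n in ℂ, the average over all tuples ξ = (ξ_1,...,ξ_n) in Ω_d^n satisfies: (1/d^n) Σ_{ξ ∈ Ω_d^n} |c_1ξ_1 + ... + c_nξ_n|^{2d} = Σ_{d_1+...+d_n=d, d_i ≥ 0} (d!/(d_1!···d_n!))² Π_{i=1}^n |c_i|^{2d_i} + Σ_{i ≠ j} conj(c_i)^d (c_j)^d. -/

import Mathlib

open scoped BigOperators
open ComplexConjugate


-- nthRootsFinset as image of powers of a primitive root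
lemma aux_nthRootsFinset_eq (d : ℕ) (hd : 0 < d) :
    ∃ ζ : ℂ, IsPrimitiveRoot ζ d ∧
      Polynomial.nthRootsFinset d (1 : ℂ) = (Finset.range d).image (ζ ^ ·) := by
  refine ⟨Complex.exp (2 * Real.pi * Complex.I / d), Complex.isPrimitiveRoot_exp d hd.ne', ?_⟩
  set ζ := Complex.exp (2 * Real.pi * Complex.I / d)
  have hζ : IsPrimitiveRoot ζ d := Complex.isPrimitiveRoot_exp d hd.ne'
  have h1 : Polynomial.nthRoots d (1 : ℂ) = (Multiset.range d).map (fun i => ζ ^ i * 1) :=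
    hζ.nthRoots_eq (one_pow d)
  unfold Polynomial.nthRootsFinset
  rw [h1]
  ext x
  simp [Finset.mem_image, Multiset.mem_toFinset]

lemma aux_sum_pow (d : ℕ) (hd : 0 < d) (m : ℕ) :
    ∑ ξ ∈ Polynomial.nthRootsFinset d (1 : ℂ), ξ ^ m = if d ∣ m then (d : ℂ) else 0 := by
  obtain ⟨ζ, hζ, hset⟩ := aux_nthRootsFinset_eq d hd
  rw [hset, Finset.sum_image]
  · simp_rw [← pow_mul, mul_comm, pow_mul]
    by_cases hdvd : d ∣ m
    · rw [if_pos hdvd]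
      have : ζ ^ m = 1 := by
        obtain ⟨k, rfl⟩ := hdvd
        rw [pow_mul, hζ.pow_eq_one, one_pow]
      simp [this]
    · rw [if_neg hdvd]
      have hne : ζ ^ m ≠ 1 := fun h => hdvd ((hζ.pow_eq_one_iff_dvd m).mp h)
      rw [geom_sum_eq hne d]
      have : (ζ ^ m) ^ d = 1 := by
        rw [← pow_mul, mul_comm, pow_mul, hζ.pow_eq_one, one_pow]
      rw [this, sub_self, zero_div]
  · intro i hi j hj hij
    exact hζ.pow_inj (Finset.mem_range.mp hi) (Finset.mem_range.mp hj) hij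

lemma aux_conj_root {d : ℕ} (hd : 0 < d) {ξ : ℂ} (hξ : ξ ∈ Polynomial.nthRootsFinset d (1 : ℂ)) :
    conj ξ = ξ ^ (d - 1) := by
  have h1 : ξ ^ d = 1 := (Polynomial.mem_nthRootsFinset hd 1).mp hξ
  have habs : ‖ξ‖ = 1 := by
    have : ‖ξ‖ ^ d = 1 := by rw [← norm_pow, h1, norm_one]
    rcases lt_trichotomy (‖ξ‖) 1 with h|h|h
    · have h2 := pow_lt_one₀ (norm_nonneg ξ) h hd.ne'
      rw [this] at h2; linarith
    · exact h
    · have h2 := one_lt_pow₀ h hd.ne'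
      rw [this] at h2; linarith
  have h2 : conj ξ * ξ = 1 := by
    rw [Complex.conj_mul', habs]
    norm_num
  have h3 : ξ ^ (d - 1) * ξ = 1 := by
    rw [← pow_succ, Nat.sub_add_cancel hd, h1]
  have hξ0 : ξ ≠ 0 := by
    intro h; rw [h, mul_zero] at h2; exact one_ne_zero h2.symm
  exact mul_right_cancel₀ hξ0 (h2.trans h3.symm)

/-- the "good" predicate -/
def aux_good (d a b : ℕ) : Prop := a = b ∨ (a = 0 ∧ b = d) ∨ (a = d ∧ b = 0)

instance (d a b : ℕ) : Decidable (aux_good d a b) := by unfold aux_good; infer_instance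

lemma aux_dvd_iff {d a b : ℕ} (hd : 0 < d) (ha : a ≤ d) (hb : b ≤ d) :
    d ∣ (d - 1) * a + b ↔ aux_good d a b := by
  have key : d ∣ (d - 1) * a + b ↔ (d : ℤ) ∣ ((b : ℤ) - a) := by
    rw [← Int.natCast_dvd_natCast]
    push_cast [Nat.cast_sub hd]
    constructor
    · intro h
      have h2 : (d : ℤ) ∣ (((d:ℤ) - 1) * a + b) - a * d := Dvd.dvd.sub h ⟨a, mul_comm _ _⟩
      convert h2 using 1; ring
    · intro h
      have h2 : (d : ℤ) ∣ ((b:ℤ) - a) + a * d := Dvd.dvd.add h ⟨a, mul_comm _ _⟩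
      convert h2 using 1; ring
  rw [key]
  constructor
  · intro h
    by_cases hab : a = b
    · exact Or.inl hab
    · have hne : (b : ℤ) - a ≠ 0 := by
        intro h0; exact hab (by omega)
      have hdvd : (d : ℤ) ∣ |(b : ℤ) - a| := (dvd_abs _ _).mpr h
      have hle : (d : ℤ) ≤ |(b : ℤ) - a| := Int.le_of_dvd (abs_pos.mpr hne) hdvd
      have : |(b : ℤ) - a| ≤ d := by
        rw [abs_le]; omega
      have heq : |(b : ℤ) - a| = d := le_antisymm this hle
      rcases abs_eq (by positivity : (0:ℤ) ≤ d) |>.mp heq with h1 | h1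
      · right; left; omega
      · right; right; omega
  · rintro (rfl | ⟨rfl, rfl⟩ | ⟨rfl, rfl⟩) <;> simp

lemma aux_S (d : ℕ) (hd : 0 < d) (a b : ℕ) (ha : a ≤ d) (hb : b ≤ d) :
    ∑ ξ ∈ Polynomial.nthRootsFinset d (1 : ℂ), conj ξ ^ a * ξ ^ b
      = if aux_good d a b then (d : ℂ) else 0 := by
  rw [Finset.sum_congr rfl (fun ξ hξ => by
    rw [aux_conj_root hd hξ, ← pow_mul, ← pow_add]),
    aux_sum_pow d hd]
  simp only [aux_dvd_iff hd ha hb]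



lemma aux_delta {n d : ℕ} {g : Fin n → ℕ} (hg : ∑ k, g k = d) {i : Fin n} (hi : g i = d) :
    g = fun k => if k = i then d else 0 := by
  have h0 : ∑ k ∈ Finset.univ.erase i, g k = 0 := by
    have := Finset.add_sum_erase Finset.univ g (Finset.mem_univ i)
    omega
  funext k
  by_cases hk : k = i
  · simp [hk, hi]
  · simp only [if_neg hk]
    exact (Finset.sum_eq_zero_iff.mp h0) k (Finset.mem_erase.mpr ⟨hk, Finset.mem_univ k⟩)

lemma aux_delta_inj {n d : ℕ} (hd : 0 < d) {i i' : Fin n}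
    (h : (fun k => if k = i then d else 0) = (fun k => if k = i' then d else 0)) : i = i' := by
  by_contra hne
  have := congrFun h i
  simp [hne] at this
  omega

lemma aux_mem_delta {n d : ℕ} (i : Fin n) :
    (fun k => if k = i then d else 0) ∈ Finset.Nat.antidiagonalTuple n d := by
  rw [Finset.Nat.mem_antidiagonalTuple]
  simp [Finset.sum_ite_eq']

lemma aux_multinomial_delta {n d : ℕ} (i : Fin n) :
    Nat.multinomial Finset.univ (fun k => if k = i then d else 0) = 1 := by
  unfold Nat.multinomial
  have h1 : ∑ k : Fin n, (if k = i then d else 0) = d := by simp [Finset.sum_ite_eq']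
  have h2 : ∏ k : Fin n, (Nat.factorial (if k = i then d else 0)) = Nat.factorial d := by
    simp [apply_ite Nat.factorial, Finset.prod_ite_eq']
  rw [h1, h2, Nat.div_self (Nat.factorial_pos d)]

lemma aux_filter_eq (d n : ℕ) (hd : 0 < d) :
    ((Finset.Nat.antidiagonalTuple n d ×ˢ Finset.Nat.antidiagonalTuple n d).filter
        (fun p => ∀ i, aux_good d (p.1 i) (p.2 i)))
      = (Finset.Nat.antidiagonalTuple n d).image (fun f => (f, f))
        ∪ ((Finset.univ : Finset (Fin n × Fin n)).filter (fun p => p.1 ≠ p.2)).image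
            (fun p => (fun k => if k = p.1 then d else 0, fun k => if k = p.2 then d else 0)) := by
  ext ⟨g, f⟩
  simp only [Finset.mem_filter, Finset.mem_product, Finset.mem_union, Finset.mem_image,
    Finset.Nat.mem_antidiagonalTuple, Finset.mem_univ, true_and, Prod.mk.injEq, Prod.exists]
  constructor
  · rintro ⟨⟨hg, hf⟩, hgood⟩
    by_cases hgf : g = f
    · exact Or.inl ⟨g, hg, rfl, hgf⟩
    · right
      obtain ⟨i, hi⟩ : ∃ i, g i ≠ f i := Function.ne_iff.mp hgf
      rcases hgood i with h | ⟨h1, h2⟩ | ⟨h1, h2⟩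
      · exact absurd h hi
      · -- g i = 0, f i = d : f = δ_i, find j with g j = d
        have hfδ := aux_delta hf h2
        obtain ⟨j, hj⟩ : ∃ j, g j ≠ 0 := by
          by_contra hc
          push_neg at hc
          rw [Finset.sum_eq_zero (fun k _ => hc k)] at hg
          omega
        have hji : j ≠ i := fun hc => hj (hc ▸ h1)
        have hgj : g j = d := by
          rcases hgood j with h | ⟨h1', h2'⟩ | ⟨h1', h2'⟩
          · exfalso
            rw [hfδ] at h
            simp [if_neg hji] at h
            exact hj h
          · exact absurd h1' hj
          · exact h1'
        have hgδ := aux_delta hg hgj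
        exact ⟨j, i, hji, hgδ.symm, hfδ.symm⟩
      · -- g i = d, f i = 0
        have hgδ := aux_delta hg h1
        obtain ⟨j, hj⟩ : ∃ j, f j ≠ 0 := by
          by_contra hc
          push_neg at hc
          rw [Finset.sum_eq_zero (fun k _ => hc k)] at hf
          omega
        have hji : j ≠ i := fun hc => hj (hc ▸ h2)
        have hfj : f j = d := by
          rcases hgood j with h | ⟨h1', h2'⟩ | ⟨h1', h2'⟩
          · exfalso
            rw [hgδ] at h
            simp [if_neg hji] at h
            exact hj h.symm
          · exact h2'
          · exfalso
            rw [hgδ] at h1'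
            simp [if_neg hji] at h1'
            omega
        have hfδ := aux_delta hf hfj
        exact ⟨i, j, fun hc => hji hc.symm, hgδ.symm, hfδ.symm⟩
  · rintro (⟨f', hf', rfl, rfl⟩ | ⟨i, j, hij, rfl, rfl⟩)
    · exact ⟨⟨hf', hf'⟩, fun i => Or.inl rfl⟩
    · refine ⟨⟨by simp [Finset.sum_ite_eq'], by simp [Finset.sum_ite_eq']⟩, fun k => ?_⟩
      by_cases hki : k = i
      · subst hki
        right; right
        simp [aux_good, hij]
      · by_cases hkj : k = j
        · subst hkj
          right; left
          simp [aux_good, hki]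
        · left
          simp [hki, hkj]



/-- Averaging `|c₁ξ₁ + ⋯ + c_nξ_n|^{2d}` over all tuples of `d`-th roots of unity:
`(1/dⁿ) Σ_ξ |Σ_i c_i ξ_i|^{2d}
  = Σ_{d₁+⋯+d_n=d} (d!/(d₁!⋯d_n!))² Π_i |c_i|^{2d_i} + Σ_{i≠j} conj(c_i)^d c_j^d`,
where `|z|^{2d} = conj(z)^d z^d`. -/
theorem stmt2 (d n : ℕ) (hd : 0 < d) (hn : 0 < n) (c : Fin n → ℂ) :
    (1 / (d : ℂ) ^ n) *
      ∑ ξ ∈ Fintype.piFinset (fun _ : Fin n => Polynomial.nthRootsFinset d (1 : ℂ)),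
        (conj (∑ i, c i * ξ i)) ^ d * (∑ i, c i * ξ i) ^ d
      = (∑ f ∈ Finset.Nat.antidiagonalTuple n d,
          (Nat.multinomial Finset.univ f : ℂ) ^ 2
            * ∏ i, ((‖c i‖ : ℝ) : ℂ) ^ (2 * f i))
        + ∑ p ∈ (Finset.univ : Finset (Fin n × Fin n)).filter (fun p => p.1 ≠ p.2),
            (conj (c p.1)) ^ d * (c p.2) ^ d := by
  classical
  have hdC : (d : ℂ) ≠ 0 := Nat.cast_ne_zero.mpr hd.ne'
  set A := Finset.Nat.antidiagonalTuple n d with hAdef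
  have hpA : Finset.piAntidiag (Finset.univ : Finset (Fin n)) d = A :=
    Finset.piAntidiag_univ_fin_eq_antidiagonalTuple d n
  have hmem_le : ∀ g ∈ A, ∀ i, g i ≤ d := by
    intro g hg i
    rw [hAdef, Finset.Nat.mem_antidiagonalTuple] at hg
    calc g i ≤ ∑ k, g k := Finset.single_le_sum (fun k _ => Nat.zero_le _) (Finset.mem_univ i)
      _ = d := hg
  set W : (Fin n → ℕ) → (Fin n → ℕ) → ℂ := fun g f =>
    (Nat.multinomial Finset.univ g : ℂ) * (Nat.multinomial Finset.univ f : ℂ) *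
      ∏ i, (conj (c i) ^ g i * c i ^ f i) with hW
  have expand : ∀ ξ : Fin n → ℂ,
      (conj (∑ i, c i * ξ i)) ^ d * (∑ i, c i * ξ i) ^ d
        = ∑ g ∈ A, ∑ f ∈ A, W g f * ∏ i, (conj (ξ i) ^ g i * ξ i ^ f i) := by
    intro ξ
    have h1 : conj (∑ i, c i * ξ i) = ∑ i, conj (c i) * conj (ξ i) := by
      rw [map_sum]; simp_rw [map_mul]
    rw [h1, Finset.sum_pow_eq_sum_piAntidiag, Finset.sum_pow_eq_sum_piAntidiag, hpA,
      Finset.sum_mul_sum]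
    refine Finset.sum_congr rfl fun g _ => Finset.sum_congr rfl fun f _ => ?_
    simp_rw [hW, mul_pow, Finset.prod_mul_distrib]
    ring
  have key : ∑ ξ ∈ Fintype.piFinset (fun _ : Fin n => Polynomial.nthRootsFinset d (1 : ℂ)),
      (conj (∑ i, c i * ξ i)) ^ d * (∑ i, c i * ξ i) ^ d
      = (d : ℂ) ^ n *
        ((∑ f ∈ A, (Nat.multinomial Finset.univ f : ℂ) ^ 2
            * ∏ i, ((‖c i‖ : ℝ) : ℂ) ^ (2 * f i))
          + ∑ p ∈ (Finset.univ : Finset (Fin n × Fin n)).filter (fun p => p.1 ≠ p.2),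
              (conj (c p.1)) ^ d * (c p.2) ^ d) := by
    calc ∑ ξ ∈ Fintype.piFinset (fun _ : Fin n => Polynomial.nthRootsFinset d (1 : ℂ)),
        (conj (∑ i, c i * ξ i)) ^ d * (∑ i, c i * ξ i) ^ d
        = ∑ ξ ∈ Fintype.piFinset (fun _ : Fin n => Polynomial.nthRootsFinset d (1 : ℂ)),
            ∑ g ∈ A, ∑ f ∈ A, W g f * ∏ i, (conj (ξ i) ^ g i * ξ i ^ f i) :=
          Finset.sum_congr rfl fun ξ _ => expand ξ
      _ = ∑ g ∈ A, ∑ f ∈ A, W g f *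
            ∑ ξ ∈ Fintype.piFinset (fun _ : Fin n => Polynomial.nthRootsFinset d (1 : ℂ)),
              ∏ i, (conj (ξ i) ^ g i * ξ i ^ f i) := by
          rw [Finset.sum_comm]
          refine Finset.sum_congr rfl fun g _ => ?_
          rw [Finset.sum_comm]
          exact Finset.sum_congr rfl fun f _ => (Finset.mul_sum _ _ _).symm
      _ = ∑ g ∈ A, ∑ f ∈ A, W g f *
            (if (∀ i, aux_good d (g i) (f i)) then (d : ℂ) ^ n else 0) := by
          refine Finset.sum_congr rfl fun g hg => Finset.sum_congr rfl fun f hf => ?_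
          congr 1
          rw [← Finset.prod_univ_sum (fun _ => Polynomial.nthRootsFinset d (1 : ℂ))
            (fun i x => conj x ^ g i * x ^ f i)]
          rw [Finset.prod_congr rfl
            (fun i _ => aux_S d hd (g i) (f i) (hmem_le g hg i) (hmem_le f hf i))]
          by_cases h : ∀ i, aux_good d (g i) (f i)
          · rw [if_pos h, Finset.prod_congr rfl (fun i _ => if_pos (h i)),
              Finset.prod_const, Finset.card_univ, Fintype.card_fin]
          · rw [if_neg h]
            push_neg at h
            obtain ⟨i, hi⟩ := h
            exact Finset.prod_eq_zero (Finset.mem_univ i) (if_neg hi)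
      _ = ∑ p ∈ (A ×ˢ A).filter (fun p => ∀ i, aux_good d (p.1 i) (p.2 i)),
            W p.1 p.2 * (d : ℂ) ^ n := by
          rw [Finset.sum_filter, Finset.sum_product]
          exact Finset.sum_congr rfl fun g _ => Finset.sum_congr rfl fun f _ => by
            rw [mul_ite, mul_zero]
      _ = (∑ f ∈ A, W f f * (d : ℂ) ^ n)
          + ∑ p ∈ (Finset.univ : Finset (Fin n × Fin n)).filter (fun p => p.1 ≠ p.2),
              W (fun k => if k = p.1 then d else 0) (fun k => if k = p.2 then d else 0)
                * (d : ℂ) ^ n := by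
          rw [aux_filter_eq d n hd]
          rw [Finset.sum_union]
          · congr 1
            · rw [Finset.sum_image (fun f _ f' _ h => by
                simpa using congrArg Prod.fst h)]
            · rw [Finset.sum_image]
              intro p hp q hq h
              rw [Prod.mk.injEq] at h
              exact Prod.ext (aux_delta_inj hd h.1) (aux_delta_inj hd h.2)
          · rw [Finset.disjoint_left]
            rintro ⟨g, f⟩ hD hO
            simp only [Finset.mem_image, Prod.mk.injEq] at hD hO
            obtain ⟨f', _, h1, h2⟩ := hD
            obtain ⟨p, hp, h3, h4⟩ := hO
            have hgf : g = f := h1.symm.trans h2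
            have := aux_delta_inj hd (h3.trans ((hgf.trans h4.symm)))
            simp only [Finset.mem_filter] at hp
            exact hp.2 this
      _ = (d : ℂ) ^ n *
          ((∑ f ∈ A, (Nat.multinomial Finset.univ f : ℂ) ^ 2
              * ∏ i, ((‖c i‖ : ℝ) : ℂ) ^ (2 * f i))
            + ∑ p ∈ (Finset.univ : Finset (Fin n × Fin n)).filter (fun p => p.1 ≠ p.2),
                (conj (c p.1)) ^ d * (c p.2) ^ d) := by
          rw [mul_add]
          congr 1
          · rw [Finset.mul_sum]
            refine Finset.sum_congr rfl fun f _ => ?_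
            simp only [hW]
            have : ∏ i, (conj (c i) ^ f i * c i ^ f i)
                = ∏ i, ((‖c i‖ : ℝ) : ℂ) ^ (2 * f i) := by
              refine Finset.prod_congr rfl fun i _ => ?_
              rw [← mul_pow, Complex.conj_mul', ← pow_mul]
            rw [this]; ring
          · rw [Finset.mul_sum]
            refine Finset.sum_congr rfl fun p hp => ?_
            simp only [hW]
            rw [aux_multinomial_delta, aux_multinomial_delta]
            have hprod : ∀ (w v : Fin n → ℂ) (a b : Fin n),
                ∏ i, (w i ^ (if i = a then d else 0) * v i ^ (if i = b then d else 0))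
                  = w a ^ d * v b ^ d := by
              intro w v a b
              rw [Finset.prod_mul_distrib]
              congr 1
              · rw [Finset.prod_congr rfl (fun i _ => by
                  rw [apply_ite (w i ^ ·), pow_zero]), Finset.prod_ite_eq' Finset.univ a
                    (fun i => w i ^ d)]
                simp
              · rw [Finset.prod_congr rfl (fun i _ => by
                  rw [apply_ite (v i ^ ·), pow_zero]), Finset.prod_ite_eq' Finset.univ b
                    (fun i => v i ^ d)]
                simp
            rw [hprod]
            push_cast
            ring
  rw [key, one_div, inv_mul_cancel_left₀ (pow_ne_zero n hdC)]
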